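/- Let D₁, D₂ ⊆ ℝⁿ be nonempty compact convex sets with D₁ ⊆ int D₂, h₁ < h₂ reals, T₁ = {(x, h₁) : x ∈ D₁}, T₂ = {(x, h₂) : x ∈ D₂}, F = conv(T₁ ∪ T₂) the top-heavy frustum with lateral S, and Π₁ = {(x, h₁) : x ∈ ℝⁿ}. Let b̂ = (b, b₀) with b ∈ int D₁ and b₀ < h₁, and let T be a compact convex subset of the hyperplane {(x, h₂) : x ∈ ℝⁿ} such that trunc(b̂, T) is a lower envelope of F, i.e. F ⊆ trunc(b̂, T), T₂ ⊆ T, and trunc(b̂, T) ∩ Π₁ = T₁. Then Stp(S) ≥ Stp(S_b), where S_b is the lateral of trunc(b̂, T). -/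

import Mathlib

open scoped ENNReal

open Set

section Aux
variable {V : Type*} [NormedAddCommGroup V] [NormedSpace ℝ V]

theorem interior_subset_intrinsicInterior' {A : Set V} :
    interior A ⊆ intrinsicInterior ℝ A := by
  intro x hx
  refine ⟨⟨x, subset_affineSpan ℝ A (interior_subset hx)⟩, ?_, rfl⟩
  exact interior_maximal (Set.preimage_mono interior_subset)
    (isOpen_interior.preimage continuous_subtype_val) hx

theorem intrinsicInterior_subset_interior' {A : Set V} (h : affineSpan ℝ A = ⊤) :
    intrinsicInterior ℝ A ⊆ interior A := by
  rintro x ⟨y, hy, rfl⟩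
  have hopen : IsOpen ((affineSpan ℝ A : AffineSubspace ℝ V) : Set V) := by
    rw [h]; simp
  have hmap : IsOpenMap ((↑) : (affineSpan ℝ A : Set V) → V) := hopen.isOpenMap_subtype_val
  have h2 := hmap.image_interior_subset (((↑) : (affineSpan ℝ A : Set V) → V) ⁻¹' A)
  exact interior_mono (Set.image_preimage_subset _ _) (h2 ⟨y, hy, rfl⟩)

theorem notmem_intrinsicInterior {A : Set V} {x : V}
    (hx : x ∈ intrinsicFrontier ℝ A) : x ∉ intrinsicInterior ℝ A := by
  rintro ⟨y, hy, rfl⟩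
  obtain ⟨y', hy', hyy⟩ := hx
  have hyy' : y' = y := Subtype.coe_injective hyy
  subst hyy'
  rw [← closure_diff_interior] at hy'
  exact hy'.2 hy

end Aux

noncomputable def emb (n : ℕ) (c : ℝ) :
    EuclideanSpace ℝ (Fin n) →ᵃⁱ[ℝ] EuclideanSpace ℝ (Fin n) × ℝ where
  toAffineMap :=
    { toFun := fun x => (x, c)
      linear := LinearMap.prod LinearMap.id 0
      map_vadd' := fun p v => by
        ext <;> simp [Prod.ext_iff] }
  norm_map := fun x => by
    simp [Prod.norm_def]

theorem emb_apply (n : ℕ) (c : ℝ) (x : EuclideanSpace ℝ (Fin n)) : emb n c x = (x, c) := rfl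

theorem emb_image (n : ℕ) (c : ℝ) (A : Set (EuclideanSpace ℝ (Fin n))) :
    (fun x => (x, c)) '' A = (emb n c) '' A := rfl

/-- The steepness of a subset of ℝⁿ × ℝ: the supremum (in `ℝ≥0∞`) of
`|v' − u'| / ‖v − u‖` over pairs `(u, u'), (v, v')` in the set with `v ≠ u`. -/
noncomputable def Stp {n : ℕ} (S : Set (EuclideanSpace ℝ (Fin n) × ℝ)) : ℝ≥0∞ :=
  ⨆ u ∈ S, ⨆ v ∈ S, ⨆ (_ : v.1 ≠ u.1), ENNReal.ofReal (|v.2 - u.2| / ‖v.1 - u.1‖)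

set_option maxHeartbeats 8000000 in
/-- the lateral of a top-heavy frustum is at least as steep as the lateral of a lower envelope. -/
theorem statement_13 (n : ℕ) (hn : 1 ≤ n)
    (D₁ D₂ : Set (EuclideanSpace ℝ (Fin n)))
    (hD₁ne : D₁.Nonempty) (hD₂ne : D₂.Nonempty)
    (hD₁cpt : IsCompact D₁) (hD₁conv : Convex ℝ D₁)
    (hD₂cpt : IsCompact D₂) (hD₂conv : Convex ℝ D₂)
    (htop : D₁ ⊆ interior D₂)
    (h₁ h₂ : ℝ) (hh : h₁ < h₂)
    (T₁ T₂ F : Set (EuclideanSpace ℝ (Fin n) × ℝ))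
    (hT₁ : T₁ = (fun x => (x, h₁)) '' D₁)
    (hT₂ : T₂ = (fun x => (x, h₂)) '' D₂)
    (hF : F = convexHull ℝ (T₁ ∪ T₂))
    (S : Set (EuclideanSpace ℝ (Fin n) × ℝ))
    (hS : S = frontier F \ (intrinsicInterior ℝ T₁ ∪ intrinsicInterior ℝ T₂))
    (b : EuclideanSpace ℝ (Fin n)) (b₀ : ℝ) (hb : b ∈ interior D₁) (hb₀ : b₀ < h₁)
    (T : Set (EuclideanSpace ℝ (Fin n) × ℝ)) (hTcpt : IsCompact T) (hTconv : Convex ℝ T)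
    (hThyp : T ⊆ {z : EuclideanSpace ℝ (Fin n) × ℝ | z.2 = h₂})
    -- trunc(b̂, T) is a lower envelope of F
    (henv : F ⊆ convexHull ℝ ({((b, b₀) : EuclideanSpace ℝ (Fin n) × ℝ)} ∪ T))
    (hT₂T : T₂ ⊆ T)
    (hsect : convexHull ℝ ({((b, b₀) : EuclideanSpace ℝ (Fin n) × ℝ)} ∪ T) ∩ {z : EuclideanSpace ℝ (Fin n) × ℝ | z.2 = h₁} = T₁)
    (Sb : Set (EuclideanSpace ℝ (Fin n) × ℝ))
    (hSb : Sb = {z | ∃ w ∈ intrinsicFrontier ℝ T, ∃ l ∈ Set.Icc (0:ℝ) 1,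
      z = (1 - l) • ((b, b₀) : EuclideanSpace ℝ (Fin n) × ℝ) + l • w}) :
    Stp Sb ≤ Stp S := by
  have hb₀h₂ : b₀ < h₂ := hb₀.trans hh
  set bh : EuclideanSpace ℝ (Fin n) × ℝ := (b, b₀) with hbh
  set C := convexHull ℝ ({bh} ∪ T) with hC
  set P := Prod.fst '' T with hP
  -- basic facts about P
  have hD2P : D₂ ⊆ P := fun x hx => ⟨(x, h₂), hT₂T (hT₂ ▸ ⟨x, hx, rfl⟩), rfl⟩
  have hTP : T = (fun x => (x, h₂)) '' P := by
    apply Set.Subset.antisymm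
    · intro z hz
      exact ⟨z.1, ⟨z, hz, rfl⟩, Prod.ext rfl (hThyp hz).symm⟩
    · rintro z ⟨x, ⟨w, hw, rfl⟩, rfl⟩
      have hww : ((w.1, h₂) : EuclideanSpace ℝ (Fin n) × ℝ) = w := Prod.ext rfl (hThyp hw).symm
      show ((w.1, h₂) : EuclideanSpace ℝ (Fin n) × ℝ) ∈ T
      rwa [hww]
  have hPconv : Convex ℝ P := hTconv.linear_image (LinearMap.fst ℝ _ _)
  have hPcpt : IsCompact P := hTcpt.image continuous_fst
  have hbD₂ : b ∈ interior D₂ := htop (interior_subset hb)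
  have hbP : b ∈ interior P := interior_mono hD2P hbD₂
  -- the translated set K
  set K := (fun x => x - b) '' P with hK
  have hKeq : K = Homeomorph.subRight b '' P := rfl
  have hmemK : ∀ x : EuclideanSpace ℝ (Fin n), x ∈ K ↔ x + b ∈ P := by
    intro x
    constructor
    · rintro ⟨p, hp, rfl⟩; simpa using hp
    · intro h; exact ⟨x + b, h, by simp⟩
  have hKconv : Convex ℝ K := by
    rw [hK, show (fun x : EuclideanSpace ℝ (Fin n) => x - b) = (fun x => -b + x) from
      funext fun x => sub_eq_neg_add x b]
    exact hPconv.translate _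
  have hKcl : IsClosed K :=
    ((hPcpt.image (continuous_id.sub continuous_const))).isClosed
  have h0K : (0 : EuclideanSpace ℝ (Fin n)) ∈ interior K := by
    rw [hKeq, ← Homeomorph.image_interior]
    exact ⟨b, hbP, by simp⟩
  have hKnhds : K ∈ nhds (0 : EuclideanSpace ℝ (Fin n)) := mem_interior_iff_mem_nhds.1 h0K
  have hKabs : Absorbent ℝ K := absorbent_nhds_zero hKnhds
  have hintK : ∀ x : EuclideanSpace ℝ (Fin n), x ∈ interior K ↔ x + b ∈ interior P := by
    intro x
    rw [hKeq, ← Homeomorph.image_interior]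
    constructor
    · rintro ⟨p, hp, rfl⟩; simpa using hp
    · intro h; exact ⟨x + b, h, by simp⟩
  -- spans
  have hspanD₁ : affineSpan ℝ D₁ = ⊤ := by
    rw [← hD₁conv.interior_nonempty_iff_affineSpan_eq_top]
    exact ⟨b, hb⟩
  have hspanD₂ : affineSpan ℝ D₂ = ⊤ := by
    rw [← hD₂conv.interior_nonempty_iff_affineSpan_eq_top]
    exact ⟨b, hbD₂⟩
  -- key extraction for points of Sb
  have hSbKey : ∀ z ∈ Sb, ∃ l ∈ Set.Icc (0:ℝ) 1,
      z.2 = b₀ + l * (h₂ - b₀) ∧ gauge K (z.1 - b) = l := by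
    intro z hz
    rw [hSb] at hz
    obtain ⟨w, hw, l, hl, rfl⟩ := hz
    have hwT : w ∈ T := intrinsicFrontier_subset hTcpt.isClosed hw
    have hw2 : w.2 = h₂ := hThyp hwT
    have hwP : w.1 ∈ P := ⟨w, hwT, rfl⟩
    have hwnotint : w.1 ∉ interior P := by
      intro hint
      apply notmem_intrinsicInterior hw
      rw [hTP, emb_image]
      rw [AffineIsometry.image_intrinsicInterior]
      refine ⟨w.1, interior_subset_intrinsicInterior' hint, ?_⟩
      rw [emb_apply]
      ext
      · rfl
      · exact hw2.symm
    have hgw : gauge K (w.1 - b) = 1 := by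
      have hle : gauge K (w.1 - b) ≤ 1 := gauge_le_one_of_mem ((hmemK _).2 (by simpa using hwP))
      rcases lt_or_eq_of_le hle with hlt | heq
      · exfalso
        have := (gauge_lt_one_iff_mem_interior hKconv hKnhds).1 hlt
        exact hwnotint (by simpa using (hintK _).1 this)
      · exact heq
    refine ⟨l, hl, ?_, ?_⟩
    · show ((1 - l) • bh + l • w).2 = b₀ + l * (h₂ - b₀)
      have : ((1 - l) • bh + l • w).2 = (1 - l) * b₀ + l * w.2 := rfl
      rw [this, hw2]; ring
    · have h1 : ((1 - l) • bh + l • w).1 - b = l • (w.1 - b) := by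
        show (1 - l) • b + l • w.1 - b = l • (w.1 - b)
        module
      rw [h1, gauge_smul_of_nonneg hl.1, hgw]
      simp
  -- reduce to a per-pair statement
  unfold Stp
  refine iSup₂_le fun u hu => iSup₂_le fun v hv => iSup_le fun hne => ?_
  obtain ⟨l, hl, hu2, hgu⟩ := hSbKey u hu
  obtain ⟨m, hm, hv2, hgv⟩ := hSbKey v hv
  set d := v.1 - u.1 with hd
  clear_value d
  have hd0 : d ≠ 0 := by rw [hd]; exact sub_ne_zero_of_ne hne
  have habs : |v.2 - u.2| = |m - l| * (h₂ - b₀) := by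
    rw [hu2, hv2, show b₀ + m * (h₂ - b₀) - (b₀ + l * (h₂ - b₀)) = (m - l) * (h₂ - b₀) by ring,
      abs_mul, abs_of_pos (show (0:ℝ) < h₂ - b₀ by linarith)]
  have hml : |m - l| ≤ max (gauge K d) (gauge K (-d)) := by
    have e1 : gauge K (v.1 - b) ≤ gauge K (u.1 - b) + gauge K d := by
      have : v.1 - b = (u.1 - b) + d := by rw [hd]; abel
      rw [this]; exact gauge_add_le hKconv hKabs _ _
    have e2 : gauge K (u.1 - b) ≤ gauge K (v.1 - b) + gauge K (-d) := by
      have : u.1 - b = (v.1 - b) + (-d) := by rw [hd]; abel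
      rw [this]; exact gauge_add_le hKconv hKabs _ _
    rw [hgu, hgv] at e1 e2
    rw [abs_sub_le_iff]
    constructor
    · calc m - l ≤ gauge K d := by linarith
        _ ≤ _ := le_max_left _ _
    · calc l - m ≤ gauge K (-d) := by linarith
        _ ≤ _ := le_max_right _ _
  by_cases hcz : max (gauge K d) (gauge K (-d)) ≤ 0
  · have : |v.2 - u.2| = 0 := by
      have h1 : |m - l| = 0 := le_antisymm (hml.trans hcz) (abs_nonneg _)
      rw [habs, h1, zero_mul]
    rw [this]
    simp
  push_neg at hcz
  set d' := if gauge K d < gauge K (-d) then -d else d with hd'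
  have hgd' : gauge K d' = max (gauge K d) (gauge K (-d)) := by
    rw [hd']
    split_ifs with h
    · exact (max_eq_right h.le).symm
    · exact (max_eq_left (not_lt.1 h)).symm
  have hnd' : ‖d'‖ = ‖d‖ := by
    rw [hd']; split_ifs <;> simp
  have hgd'pos : 0 < gauge K d' := by rw [hgd']; exact hcz
  clear_value d'
  -- the frontier point of K in the direction d'
  set x' := (gauge K d')⁻¹ • d' with hx'
  have hgx' : gauge K x' = 1 := by
    rw [hx', gauge_smul_of_nonneg (inv_nonneg.2 hgd'pos.le)]
    simp only [smul_eq_mul]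
    rw [inv_mul_cancel₀ hgd'pos.ne']
  clear_value x'
  have hx'K : x' ∈ K := by
    have := (gauge_le_one_iff_mem_closure hKconv hKnhds).1 (le_of_eq hgx')
    rwa [hKcl.closure_eq] at this
  have hx'notint : x' ∉ interior K := by
    intro h
    have := (gauge_lt_one_iff_mem_interior hKconv hKnhds).2 h
    rw [hgx'] at this; exact lt_irrefl _ this
  have hx'0 : x' ≠ 0 := by
    intro h
    rw [h, gauge_zero] at hgx'
    norm_num at hgx'
  have hnx' : 0 < ‖x'‖ := norm_pos_iff.2 hx'0
  set wx := x' + b with hwx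
  have hwxP : wx ∈ P := (hmemK _).1 hx'K
  have hwxnotint : wx ∉ interior P := fun h => hx'notint ((hintK _).2 h)
  have hwhT : (wx, h₂) ∈ T := by rw [hTP]; exact ⟨wx, hwxP, rfl⟩
  clear_value wx
  -- first main bound : the pair slope is at most (h₂ - b₀)/‖x'‖
  have hslope₁ : |v.2 - u.2| / ‖v.1 - u.1‖ ≤ (h₂ - b₀) / ‖x'‖ := by
    have hnxd : ‖x'‖ = ‖d‖ / gauge K d' := by
      rw [hx', norm_smul, ← hnd', norm_inv, Real.norm_eq_abs, abs_of_pos hgd'pos]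
      field_simp
    have hdn : (0:ℝ) < ‖d‖ := norm_pos_iff.2 hd0
    rw [habs, hnxd, ← hd]
    rw [div_le_div_iff₀ hdn (by positivity)]
    have h2b : (0:ℝ) < h₂ - b₀ := by linarith
    have : |m - l| ≤ gauge K d' := by rw [hgd']; exact hml
    calc |m - l| * (h₂ - b₀) * (‖d‖ / gauge K d') = (|m - l| / gauge K d') * (h₂ - b₀) * ‖d‖ := by
          field_simp
      _ ≤ 1 * (h₂ - b₀) * ‖d‖ := by
          have : |m - l| / gauge K d' ≤ 1 := (div_le_one hgd'pos).2 this
          have h3 : (0:ℝ) ≤ (h₂ - b₀) * ‖d‖ := by positivity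
          calc (|m - l| / gauge K d') * (h₂ - b₀) * ‖d‖ = (|m - l| / gauge K d') * ((h₂ - b₀) * ‖d‖) := by ring
            _ ≤ 1 * ((h₂ - b₀) * ‖d‖) := mul_le_mul_of_nonneg_right this h3
            _ = 1 * (h₂ - b₀) * ‖d‖ := by ring
      _ = (h₂ - b₀) * ‖d‖ := by ring
  -- the parameter s for the intersection with the bottom plane
  set σ := (h₁ - b₀) / (h₂ - b₀) with hσ
  have hσ0 : 0 < σ := div_pos (by linarith) (by linarith)
  have hσ1 : σ < 1 := (div_lt_one (by linarith)).2 (by linarith)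
  clear_value σ
  set p1 := (1 - σ) • b + σ • wx with hp1
  clear_value p1
  set ph : EuclideanSpace ℝ (Fin n) × ℝ := (p1, h₁) with hph
  have hphC : ph ∈ C := by
    have h1 : bh ∈ C := subset_convexHull ℝ _ (Or.inl rfl)
    have h2 : ((wx, h₂) : EuclideanSpace ℝ (Fin n) × ℝ) ∈ C :=
      subset_convexHull ℝ _ (Or.inr hwhT)
    have h3 := (convex_convexHull ℝ ({bh} ∪ T)) h1 h2 (by linarith : (0:ℝ) ≤ 1 - σ)
      hσ0.le (by ring)
    rw [← hC] at h3
    have hden : h₂ - b₀ ≠ 0 := by linarith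
    have hcomp : (1 - σ) • bh + σ • ((wx, h₂) : EuclideanSpace ℝ (Fin n) × ℝ) = ph := by
      apply Prod.ext
      · show (1 - σ) • b + σ • wx = p1
        rw [hp1]
      · show (1 - σ) * b₀ + σ * h₂ = h₁
        rw [hσ]; field_simp; ring
    rwa [hcomp] at h3
  have hphT₁ : ph ∈ T₁ := by
    rw [← hsect]
    exact ⟨hphC, rfl⟩
  have hp1D₁ : p1 ∈ D₁ := by
    rw [hT₁] at hphT₁
    obtain ⟨x, hx, hxe⟩ := hphT₁
    have : x = p1 := congrArg Prod.fst hxe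
    rwa [← this]
  have hTne : T.Nonempty := hD₂ne.image _ |>.mono (hT₂ ▸ hT₂T)
  -- p1 is not in the interior of D₁
  have hp1notint : p1 ∉ interior D₁ := by
    intro hint
    obtain ⟨ε, hε, hball⟩ := Metric.mem_nhds_iff.1 (mem_interior_iff_mem_nhds.1 hint)
    apply hwxnotint
    rw [mem_interior]
    refine ⟨Metric.ball wx (ε / σ), ?_, Metric.isOpen_ball,
      Metric.mem_ball_self (by positivity)⟩
    intro y hy
    -- the point of the bottom disc corresponding to y
    set x := (1 - σ) • b + σ • y with hxdef
    have hxD₁ : x ∈ D₁ := by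
      apply hball
      rw [Metric.mem_ball, dist_eq_norm]
      have : x - p1 = σ • (y - wx) := by rw [hxdef, hp1]; module
      rw [this, norm_smul, Real.norm_eq_abs, abs_of_pos hσ0]
      rw [Metric.mem_ball, dist_eq_norm] at hy
      calc σ * ‖y - wx‖ < σ * (ε / σ) := by
            exact mul_lt_mul_of_pos_left hy hσ0
        _ = ε := by field_simp
    -- (x, h₁) belongs to the cone C
    have hxC : ((x, h₁) : EuclideanSpace ℝ (Fin n) × ℝ) ∈ C := by
      apply henv
      rw [hF]
      exact subset_convexHull ℝ _ (Or.inl (hT₁ ▸ ⟨x, hxD₁, rfl⟩))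
    -- decompose it as a combination of bh and a point of T
    rw [hC, Set.singleton_union, convexHull_insert hTne, mem_convexJoin] at hxC
    obtain ⟨a, ha, t, ht, hseg⟩ := hxC
    rw [Set.mem_singleton_iff] at ha
    subst ha
    rw [hTconv.convexHull_eq] at ht
    obtain ⟨α, β, hα, hβ, hαβ, heq⟩ := hseg
    have ht2 : t.2 = h₂ := hThyp ht
    have hsnd : α * b₀ + β * t.2 = h₁ := congrArg Prod.snd heq
    rw [ht2] at hsnd
    have hβσ : β = σ := by
      have hb2 : β * (h₂ - b₀) = h₁ - b₀ := by
        have : α = 1 - β := by linarith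
        rw [this] at hsnd; nlinarith
      rw [hσ, eq_div_iff (show (0:ℝ) < h₂ - b₀ by linarith).ne']
      exact hb2
    have hfst : α • bh.1 + β • t.1 = x := congrArg Prod.fst heq
    have ht1 : t.1 = y := by
      have hα' : α = 1 - σ := by rw [← hβσ]; linarith
      rw [hβσ, hα'] at hfst
      have : σ • t.1 = σ • y := by
        have hb1 : bh.1 = b := rfl
        rw [hb1] at hfst
        rw [hxdef] at hfst
        have := sub_eq_zero.2 hfst
        have h5 : σ • t.1 - σ • y = 0 := by
          have : (1 - σ) • b + σ • t.1 - ((1 - σ) • b + σ • y) = σ • t.1 - σ • y := by module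
          rw [← this, hfst]
          simp [hxdef]
        linear_combination (norm := module) h5
      exact smul_right_injective _ hσ0.ne' this
    exact ⟨t, ht, ht1⟩
  -- ph is in S
  have hT₁F : T₁ ⊆ F := hF ▸ (Set.subset_union_left.trans (subset_convexHull ℝ _))
  have hT₂F : T₂ ⊆ F := hF ▸ (Set.subset_union_right.trans (subset_convexHull ℝ _))
  have hFlow : F ⊆ {z : EuclideanSpace ℝ (Fin n) × ℝ | h₁ ≤ z.2} := by
    rw [hF]
    apply convexHull_min
    · rintro z (hz | hz)
      · rw [hT₁] at hz; obtain ⟨x, _, rfl⟩ := hz; exact le_refl h₁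
      · rw [hT₂] at hz; obtain ⟨x, _, rfl⟩ := hz; exact hh.le
    · exact convex_halfSpace_ge (IsLinearMap.mk (fun x y => rfl) (fun c x => rfl)) h₁
  have hFhigh : F ⊆ {z : EuclideanSpace ℝ (Fin n) × ℝ | z.2 ≤ h₂} := by
    rw [hF]
    apply convexHull_min
    · rintro z (hz | hz)
      · rw [hT₁] at hz; obtain ⟨x, _, rfl⟩ := hz; exact hh.le
      · rw [hT₂] at hz; obtain ⟨x, _, rfl⟩ := hz; exact le_refl h₂
    · exact convex_halfSpace_le (IsLinearMap.mk (fun x y => rfl) (fun c x => rfl)) h₂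
  have hbot_frontier : ∀ z : EuclideanSpace ℝ (Fin n) × ℝ, z ∈ F → (z.2 = h₁ ∨ z.2 = h₂) →
      z ∈ frontier F := by
    intro z hzF hz2
    rw [frontier, mem_diff]
    refine ⟨subset_closure hzF, ?_⟩
    intro hintF
    obtain ⟨ε, hε, hball⟩ := Metric.mem_nhds_iff.1 (mem_interior_iff_mem_nhds.1 hintF)
    rcases hz2 with hz2 | hz2
    · have : (z.1, h₁ - ε/2) ∈ F := by
        apply hball
        rw [Metric.mem_ball, Prod.dist_eq, hz2]
        simp only [dist_self]
        rw [Real.dist_eq]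
        have : |h₁ - ε/2 - h₁| = ε/2 := by rw [abs_of_nonpos (by linarith)]; ring
        rw [this]
        simp [hε]
      have := hFlow this
      simp only [Set.mem_setOf_eq] at this
      linarith
    · have : (z.1, h₂ + ε/2) ∈ F := by
        apply hball
        rw [Metric.mem_ball, Prod.dist_eq, hz2]
        simp only [dist_self]
        rw [Real.dist_eq]
        have : |h₂ + ε/2 - h₂| = ε/2 := by rw [abs_of_pos (by linarith)]; ring
        rw [this]
        simp [hε]
      have := hFhigh this
      simp only [Set.mem_setOf_eq] at this
      linarith
  have hphS : ph ∈ S := by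
    rw [hS, mem_diff]
    refine ⟨hbot_frontier ph (hT₁F hphT₁) (Or.inl rfl), ?_⟩
    rintro (hin | hin)
    · -- would give p1 ∈ interior D₁
      apply hp1notint
      rw [hT₁, emb_image, AffineIsometry.image_intrinsicInterior] at hin
      obtain ⟨x, hx, hxe⟩ := hin
      have hxp : x = p1 := congrArg Prod.fst hxe
      rw [← hxp]
      exact intrinsicInterior_subset_interior' hspanD₁ hx
    · have := intrinsicInterior_subset hin
      rw [hT₂] at this
      obtain ⟨x, _, hxe⟩ := this
      have : h₂ = h₁ := congrArg Prod.snd hxe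
      exact absurd this hh.ne'
  -- now construct the second point of the pair, on the relative boundary of T₂
  set u0 := wx - p1 with hu0
  clear_value u0
  have hu0x : u0 = (1 - σ) • x' := by
    rw [hu0, hp1, hwx]; module
  have hnu0 : ‖u0‖ = (1 - σ) * ‖x'‖ := by
    rw [hu0x, norm_smul, Real.norm_eq_abs, abs_of_pos (by linarith)]
  have hu0pos : 0 < ‖u0‖ := by rw [hnu0]; exact mul_pos (by linarith) hnx'
  have hu0ne : u0 ≠ 0 := norm_pos_iff.1 hu0pos
  set A := {t : ℝ | 0 ≤ t ∧ p1 + t • u0 ∈ D₂} with hA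
  have hp1D₂ : p1 ∈ interior D₂ := htop hp1D₁
  have hA0 : (0:ℝ) ∈ A := ⟨le_refl _, by simpa using interior_subset hp1D₂⟩
  have hAbdd : BddAbove A := by
    obtain ⟨R, hR⟩ := hD₂cpt.isBounded.exists_norm_le
    refine ⟨(R + ‖p1‖) / ‖u0‖, fun t ht => ?_⟩
    have h2 : ‖p1 + t • u0‖ ≤ R := hR _ ht.2
    have h1 : ‖t • u0‖ ≤ R + ‖p1‖ := by
      calc ‖t • u0‖ = ‖(p1 + t • u0) - p1‖ := by congr 1; abel
        _ ≤ ‖p1 + t • u0‖ + ‖p1‖ := norm_sub_le _ _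
        _ ≤ R + ‖p1‖ := by linarith
    rw [norm_smul, Real.norm_eq_abs, abs_of_nonneg ht.1] at h1
    rw [le_div_iff₀ hu0pos]
    exact h1
  have hAcl : IsClosed A := by
    have h1 : IsClosed {t : ℝ | 0 ≤ t} := isClosed_Ici
    have h2 : IsClosed {t : ℝ | p1 + t • u0 ∈ D₂} :=
      IsClosed.preimage (continuous_const.add (continuous_id.smul continuous_const))
        hD₂cpt.isClosed
    exact h1.inter h2
  set δ := sSup A with hδ
  have hδA : δ ∈ A := by rw [hδ]; exact hAcl.csSup_mem ⟨0, hA0⟩ hAbdd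
  clear_value δ
  set z1 := p1 + δ • u0 with hz1
  clear_value z1
  have hz1D₂ : z1 ∈ D₂ := by rw [hz1]; exact hδA.2
  have hδpos : 0 < δ := by
    obtain ⟨ε, hε, hball⟩ := Metric.mem_nhds_iff.1 (mem_interior_iff_mem_nhds.1 hp1D₂)
    have ht0 : ε / (2 * ‖u0‖) ∈ A := by
      refine ⟨by positivity, hball ?_⟩
      rw [Metric.mem_ball, dist_eq_norm]
      have : p1 + (ε / (2 * ‖u0‖)) • u0 - p1 = (ε / (2 * ‖u0‖)) • u0 := by module
      rw [this, norm_smul, Real.norm_eq_abs, abs_of_pos (by positivity)]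
      rw [div_mul_eq_mul_div, div_lt_iff₀ (by positivity)]
      nlinarith [mul_pos hε hu0pos]
    calc (0:ℝ) < ε / (2 * ‖u0‖) := by positivity
      _ ≤ δ := by rw [hδ]; exact le_csSup hAbdd ht0
  have hz1notint : z1 ∉ interior D₂ := by
    intro hint
    obtain ⟨ε, hε, hball⟩ := Metric.mem_nhds_iff.1 (mem_interior_iff_mem_nhds.1 hint)
    have ht : δ + ε / (2 * ‖u0‖) ∈ A := by
      refine ⟨by positivity, hball ?_⟩
      rw [Metric.mem_ball, dist_eq_norm]
      have : p1 + (δ + ε / (2 * ‖u0‖)) • u0 - z1 = (ε / (2 * ‖u0‖)) • u0 := by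
        rw [hz1]; module
      rw [this, norm_smul, Real.norm_eq_abs, abs_of_pos (by positivity)]
      rw [div_mul_eq_mul_div, div_lt_iff₀ (by positivity)]
      nlinarith [mul_pos hε hu0pos]
    have hle := le_csSup hAbdd ht
    rw [← hδ] at hle
    have h2 : (0:ℝ) < ε / (2 * ‖u0‖) := by positivity
    linarith
  have hδle1 : δ ≤ 1 := by
    by_contra hgt
    push_neg at hgt
    have hδ0 : (0:ℝ) < δ := by linarith
    have hδinv1 : δ⁻¹ < 1 := by
      rw [← one_div]; exact (div_lt_one hδ0).2 hgt
    have hwxseg : wx ∈ openSegment ℝ p1 z1 := by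
      have hinv : δ⁻¹ * δ = 1 := inv_mul_cancel₀ hδ0.ne'
      have h9 : (1 - δ⁻¹) • p1 + δ⁻¹ • z1 = wx := by
        rw [hz1, smul_add, smul_smul, hinv, one_smul, hu0]
        module
      exact ⟨1 - δ⁻¹, δ⁻¹, by linarith, by positivity, by ring, h9⟩
    have := hD₂conv.openSegment_interior_self_subset_interior hp1D₂ hz1D₂ hwxseg
    exact hwxnotint (interior_mono hD2P this)
  set zh : EuclideanSpace ℝ (Fin n) × ℝ := (z1, h₂) with hzh
  have hzhT₂ : zh ∈ T₂ := hT₂ ▸ ⟨z1, hz1D₂, rfl⟩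
  have hzhS : zh ∈ S := by
    rw [hS, mem_diff]
    refine ⟨hbot_frontier zh (hT₂F hzhT₂) (Or.inr rfl), ?_⟩
    rintro (hin | hin)
    · have := intrinsicInterior_subset hin
      rw [hT₁] at this
      obtain ⟨x, _, hxe⟩ := this
      have : h₁ = h₂ := congrArg Prod.snd hxe
      exact absurd this hh.ne
    · rw [hT₂, emb_image, AffineIsometry.image_intrinsicInterior] at hin
      obtain ⟨x, hx, hxe⟩ := hin
      have hxp : x = z1 := congrArg Prod.fst hxe
      rw [hxp] at hx
      exact hz1notint (intrinsicInterior_subset_interior' hspanD₂ hx)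
  -- the pair (ph, zh) has the required slope
  have hzp1 : zh.1 - ph.1 = δ • u0 := by
    show z1 - p1 = δ • u0
    rw [hz1]; abel
  have hzpnorm : ‖zh.1 - ph.1‖ = δ * ‖u0‖ := by
    rw [hzp1, norm_smul, Real.norm_eq_abs, abs_of_pos hδpos]
  have hzpne : zh.1 ≠ ph.1 := by
    intro h
    rw [sub_eq_zero.2 h] at hzp1
    exact hu0ne (by
      have : δ • u0 = 0 := hzp1.symm
      rcases smul_eq_zero.1 this with h | h
      · exact absurd h hδpos.ne'
      · exact h)
  have hslope₂ : (h₂ - b₀) / ‖x'‖ ≤ |zh.2 - ph.2| / ‖zh.1 - ph.1‖ := by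
    have hzp2 : zh.2 - ph.2 = h₂ - h₁ := rfl
    rw [hzp2, hzpnorm, hnu0, abs_of_pos (show (0:ℝ) < h₂ - h₁ by linarith)]
    have hh2h1 : h₂ - h₁ = (1 - σ) * (h₂ - b₀) := by
      rw [hσ]
      field_simp [(show (0:ℝ) < h₂ - b₀ by linarith).ne']
      ring
    rw [hh2h1]
    have hσlt : (0:ℝ) < 1 - σ := by linarith
    have hden2 : (0:ℝ) < δ * ((1 - σ) * ‖x'‖) := mul_pos hδpos (mul_pos hσlt hnx')
    rw [div_le_div_iff₀ hnx' hden2]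
    have key : δ * ‖x'‖ ≤ ‖x'‖ := by
      nlinarith [mul_nonneg (sub_nonneg.2 hδle1) hnx'.le]
    calc (h₂ - b₀) * (δ * ((1 - σ) * ‖x'‖)) = ((1 - σ) * (h₂ - b₀)) * (δ * ‖x'‖) := by ring
      _ ≤ ((1 - σ) * (h₂ - b₀)) * ‖x'‖ := by
          apply mul_le_mul_of_nonneg_left key
          exact mul_nonneg (by linarith) (by linarith)
      _ = (1 - σ) * (h₂ - b₀) * ‖x'‖ := by ring
  rw [hd]
  calc ENNReal.ofReal (|v.2 - u.2| / ‖v.1 - u.1‖)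
      ≤ ENNReal.ofReal (|zh.2 - ph.2| / ‖zh.1 - ph.1‖) :=
        ENNReal.ofReal_le_ofReal (hslope₁.trans hslope₂)
    _ ≤ ⨆ u ∈ S, ⨆ v ∈ S, ⨆ (_ : v.1 ≠ u.1), ENNReal.ofReal (|v.2 - u.2| / ‖v.1 - u.1‖) := by
        exact le_iSup₂_of_le ph hphS (le_iSup₂_of_le zh hzhS (le_iSup_of_le hzpne le_rfl))
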